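/- For c ≥ 2 with c√n ∈ ℕ, letting ℓ = max{k ∈ ℕ : (k − 1)⌈√(kn)⌉ + 1 ≤ c√n}, the burning number of the fence satisfies b(G_{c√n, n}) ≥ ⌈√(ℓn)⌉. -/

import Mathlib

open SimpleGraph

/-- The set of vertices burned after `t` rounds of the burning process on `G`,
where `s i` is the source of fire chosen in round `i + 1`. -/
def burnSet {V : Type*} (G : SimpleGraph V) (s : ℕ → V) : ℕ → Set V
  | 0 => ∅
  | t + 1 => burnSet G s t ∪ {w | ∃ u ∈ burnSet G s t, G.Adj u w} ∪ {s t}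

/-- The partial burning number `b(G, S)`: the least number of rounds needed to
burn every vertex of `S`. -/
noncomputable def pburn {V : Type*} (G : SimpleGraph V) (S : Set V) : ℕ :=
  sInf {r | ∃ s : ℕ → V, S ⊆ burnSet G s r}

/-- The burning number `b(G)`. -/
noncomputable def burn {V : Type*} (G : SimpleGraph V) : ℕ :=
  pburn G Set.univ

/-- The ball of radius `t` around `v` in graph distance. -/
def gball {V : Type*} (G : SimpleGraph V) (v : V) (t : ℕ) : Set V :=
  {w | G.dist v w ≤ t}

/-- The `m × n` Cartesian grid `P_m □ P_n`; the first coordinate is the height (row). -/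
def gridGraph (m n : ℕ) : SimpleGraph (Fin m × Fin n) :=
  (pathGraph m) □ (pathGraph n)

/-! ### Auxiliary lemmas -/

lemma burnSet_subset_succ {V : Type*} {G : SimpleGraph V} {s : ℕ → V} (t : ℕ) :
    burnSet G s t ⊆ burnSet G s (t + 1) := fun x hx => Or.inl (Or.inl hx)

lemma burnSet_mono {V : Type*} {G : SimpleGraph V} {s : ℕ → V} {i j : ℕ} (h : i ≤ j) :
    burnSet G s i ⊆ burnSet G s j := by
  induction j with
  | zero => simpa [Nat.le_zero.mp h] using subset_rfl
  | succ j ih =>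
    rcases Nat.lt_or_ge i (j + 1) with h' | h'
    · exact (ih (Nat.lt_succ_iff.mp h')).trans (burnSet_subset_succ j)
    · have : i = j + 1 := le_antisymm h h'
      subst this; exact subset_rfl

lemma source_mem_burnSet {V : Type*} {G : SimpleGraph V} {s : ℕ → V} (t : ℕ) :
    s t ∈ burnSet G s (t + 1) := Or.inr rfl

lemma exists_walk_of_mem_burnSet {V : Type*} {G : SimpleGraph V} {s : ℕ → V} :
    ∀ {r : ℕ} {w : V}, w ∈ burnSet G s r →
      ∃ t, t < r ∧ ∃ pw : G.Walk (s t) w, pw.length + t + 1 ≤ r := by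
  intro r
  induction r with
  | zero => intro w h; simp [burnSet] at h
  | succ r ih =>
    intro w h
    rcases h with (h | h) | h
    · obtain ⟨t, ht, pw, hlen⟩ := ih h
      exact ⟨t, ht.trans (Nat.lt_succ_self r), pw, by omega⟩
    · obtain ⟨u, hu, hadj⟩ := h
      obtain ⟨t, ht, pw, hlen⟩ := ih hu
      exact ⟨t, ht.trans (Nat.lt_succ_self r), pw.concat hadj, by
        rw [SimpleGraph.Walk.length_concat]; omega⟩
    · refine ⟨r, Nat.lt_succ_self r, ?_⟩
      rcases h with rfl
      exact ⟨SimpleGraph.Walk.nil, by simp⟩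

lemma grid_adj_l1 {m n : ℕ} {u x : Fin m × Fin n} (h : (gridGraph m n).Adj u x) :
    |((u.1 : ℕ) : ℤ) - ((x.1 : ℕ) : ℤ)| + |((u.2 : ℕ) : ℤ) - ((x.2 : ℕ) : ℤ)| ≤ 1 := by
  rcases h with ⟨h1, h2⟩ | ⟨h1, h2⟩
  · rw [pathGraph_adj] at h1
    rw [h2]
    have : |((u.1 : ℕ) : ℤ) - ((x.1 : ℕ) : ℤ)| = 1 := by
      rcases h1 with h1 | h1
      · have : ((u.1 : ℕ) : ℤ) - ((x.1 : ℕ) : ℤ) = -1 := by omega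
        rw [this]; norm_num
      · have : ((u.1 : ℕ) : ℤ) - ((x.1 : ℕ) : ℤ) = 1 := by omega
        rw [this]; norm_num
    simp [this]
  · rw [pathGraph_adj] at h1
    rw [h2]
    have : |((u.2 : ℕ) : ℤ) - ((x.2 : ℕ) : ℤ)| = 1 := by
      rcases h1 with h1 | h1
      · have : ((u.2 : ℕ) : ℤ) - ((x.2 : ℕ) : ℤ) = -1 := by omega
        rw [this]; norm_num
      · have : ((u.2 : ℕ) : ℤ) - ((x.2 : ℕ) : ℤ) = 1 := by omega
        rw [this]; norm_num
    simp [this]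

lemma walk_l1 {m n : ℕ} {u w : Fin m × Fin n} (p : (gridGraph m n).Walk u w) :
    |((u.1 : ℕ) : ℤ) - ((w.1 : ℕ) : ℤ)| + |((u.2 : ℕ) : ℤ) - ((w.2 : ℕ) : ℤ)|
      ≤ (p.length : ℤ) := by
  induction p with
  | nil => simp
  | @cons a x b h p ih =>
    have h1 := grid_adj_l1 h
    have t1 : |((a.1 : ℕ) : ℤ) - ((b.1 : ℕ) : ℤ)| ≤
        |((a.1 : ℕ) : ℤ) - ((x.1 : ℕ) : ℤ)| + |((x.1 : ℕ) : ℤ) - ((b.1 : ℕ) : ℤ)| :=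
      abs_sub_le _ _ _
    have t2 : |((a.2 : ℕ) : ℤ) - ((b.2 : ℕ) : ℤ)| ≤
        |((a.2 : ℕ) : ℤ) - ((x.2 : ℕ) : ℤ)| + |((x.2 : ℕ) : ℤ) - ((b.2 : ℕ) : ℤ)| :=
      abs_sub_le _ _ _
    rw [SimpleGraph.Walk.length_cons]
    push_cast
    linarith

lemma no_two_rows {d : ℕ} {ρ a : ℤ} (hd : ρ + 1 ≤ (d : ℤ)) {j k : ℕ} (hjk : j < k)
    (hp : |a - (d : ℤ) * j| ≤ ρ) (hq : |a - (d : ℤ) * k| ≤ ρ)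
    (hs : ((d : ℤ) * j ≤ a ↔ (d : ℤ) * k ≤ a)) : False := by
  have hd0 : (0 : ℤ) ≤ d := Int.natCast_nonneg d
  have hjk' : (j : ℤ) + 1 ≤ (k : ℤ) := by exact_mod_cast hjk
  have hsep : (d : ℤ) * j + d ≤ (d : ℤ) * k := by nlinarith
  have hρ0 : 0 ≤ ρ := le_trans (abs_nonneg _) hp
  rcases le_or_gt ((d : ℤ) * k) a with h | h
  · have h1 : a - (d : ℤ) * j ≤ |a - (d : ℤ) * j| := le_abs_self _
    linarith
  · have hja : ¬ ((d : ℤ) * j ≤ a) := fun hh => absurd (hs.mp hh) (not_le.mpr h)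
    push_neg at hja
    have h1 : (d : ℤ) * k - a ≤ |a - (d : ℤ) * k| := by
      rw [abs_sub_comm]; exact le_abs_self _
    linarith

/-- Row set with a common sign condition: all elements lie in one row, so the set injects
into an interval of columns. -/
lemma row_card_bound {ℓ n d : ℕ} {ρ a b : ℤ} (F : Finset (Fin ℓ × Fin n))
    (hne : F.Nonempty)
    (hsame : ∀ p ∈ F, ∀ q ∈ F, p.1 = q.1)
    (hF : ∀ p ∈ F, |a - (d : ℤ) * ((p.1 : ℕ) : ℤ)| + |b - ((p.2 : ℕ) : ℤ)| ≤ ρ) :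
    ∃ e : ℤ, 0 ≤ e ∧ e ≤ ρ ∧ (∃ p ∈ F, e = |a - (d : ℤ) * ((p.1 : ℕ) : ℤ)|) ∧
      (F.card : ℤ) ≤ 2 * (ρ - e) + 1 := by
  obtain ⟨p0, hp0⟩ := hne
  set e : ℤ := |a - (d : ℤ) * ((p0.1 : ℕ) : ℤ)| with he
  have heρ : e ≤ ρ := by
    have := hF p0 hp0
    have := abs_nonneg (b - ((p0.2 : ℕ) : ℤ))
    linarith
  refine ⟨e, abs_nonneg _, heρ, ⟨p0, hp0, rfl⟩, ?_⟩
  have hcard : F.card ≤ (Finset.Icc (b - (ρ - e)) (b + (ρ - e))).card := by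
    apply Finset.card_le_card_of_injOn (fun p => ((p.2 : ℕ) : ℤ))
    · intro p hp
      have h1 : p.1 = p0.1 := hsame p hp p0 hp0
      have h2 := hF p hp
      rw [h1] at h2
      have h3 : |b - ((p.2 : ℕ) : ℤ)| ≤ ρ - e := by rw [he]; linarith
      have h4 := abs_le.mp h3
      simp only [Finset.mem_coe, Finset.mem_Icc]
      omega
    · intro p hp q hq hpq
      have h1 : p.1 = q.1 := hsame p hp q hq
      have h2 : p.2 = q.2 := by
        dsimp only at hpq
        apply Fin.ext
        exact_mod_cast hpq
      exact Prod.ext h1 h2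
  have hIcc : ((Finset.Icc (b - (ρ - e)) (b + (ρ - e))).card : ℤ) = 2 * (ρ - e) + 1 := by
    rw [Int.card_Icc]
    rw [Int.toNat_of_nonneg (by linarith)]
    ring
  calc (F.card : ℤ) ≤ ((Finset.Icc (b - (ρ - e)) (b + (ρ - e))).card : ℤ) := by
        exact_mod_cast hcard
    _ = 2 * (ρ - e) + 1 := hIcc

lemma fiber_bound {ℓ n d : ℕ} {ρ a b : ℤ} (hρ : 0 ≤ ρ) (hd : ρ + 1 ≤ (d : ℤ))
    (F : Finset (Fin ℓ × Fin n))
    (hF : ∀ p ∈ F, |a - (d : ℤ) * ((p.1 : ℕ) : ℤ)| + |b - ((p.2 : ℕ) : ℤ)| ≤ ρ) :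
    (F.card : ℤ) ≤ 2 * ρ + 1 := by
  classical
  set F1 : Finset (Fin ℓ × Fin n) := F.filter (fun p => (d : ℤ) * ((p.1 : ℕ) : ℤ) ≤ a) with hF1
  set F2 : Finset (Fin ℓ × Fin n) :=
    F.filter (fun p => ¬ ((d : ℤ) * ((p.1 : ℕ) : ℤ) ≤ a)) with hF2
  have hsplit : F1.card + F2.card = F.card := Finset.card_filter_add_card_filter_not _
  have habs : ∀ p ∈ F, |a - (d : ℤ) * ((p.1 : ℕ) : ℤ)| ≤ ρ := by
    intro p hp
    have := hF p hp
    have := abs_nonneg (b - ((p.2 : ℕ) : ℤ))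
    linarith
  have hsame1 : ∀ p ∈ F1, ∀ q ∈ F1, p.1 = q.1 := by
    intro p hp q hq
    obtain ⟨hpF, hps⟩ := Finset.mem_filter.mp hp
    obtain ⟨hqF, hqs⟩ := Finset.mem_filter.mp hq
    by_contra hne
    have hne' : (p.1 : ℕ) ≠ (q.1 : ℕ) := fun h => hne (Fin.ext h)
    rcases Nat.lt_or_ge (p.1 : ℕ) (q.1 : ℕ) with h | h
    · exact no_two_rows hd h (habs p hpF) (habs q hqF) ⟨fun _ => hqs, fun _ => hps⟩
    · exact no_two_rows hd (lt_of_le_of_ne h (Ne.symm hne')) (habs q hqF) (habs p hpF)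
        ⟨fun _ => hps, fun _ => hqs⟩
  have hsame2 : ∀ p ∈ F2, ∀ q ∈ F2, p.1 = q.1 := by
    intro p hp q hq
    obtain ⟨hpF, hps⟩ := Finset.mem_filter.mp hp
    obtain ⟨hqF, hqs⟩ := Finset.mem_filter.mp hq
    by_contra hne
    have hne' : (p.1 : ℕ) ≠ (q.1 : ℕ) := fun h => hne (Fin.ext h)
    rcases Nat.lt_or_ge (p.1 : ℕ) (q.1 : ℕ) with h | h
    · exact no_two_rows hd h (habs p hpF) (habs q hqF)
        ⟨fun hh => absurd hh hps, fun hh => absurd hh hqs⟩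
    · exact no_two_rows hd (lt_of_le_of_ne h (Ne.symm hne')) (habs q hqF) (habs p hpF)
        ⟨fun hh => absurd hh hqs, fun hh => absurd hh hps⟩
  have hFF1 : ∀ p ∈ F1, |a - (d : ℤ) * ((p.1 : ℕ) : ℤ)| + |b - ((p.2 : ℕ) : ℤ)| ≤ ρ :=
    fun p hp => hF p (Finset.mem_filter.mp hp).1
  have hFF2 : ∀ p ∈ F2, |a - (d : ℤ) * ((p.1 : ℕ) : ℤ)| + |b - ((p.2 : ℕ) : ℤ)| ≤ ρ :=
    fun p hp => hF p (Finset.mem_filter.mp hp).1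
  rcases F1.eq_empty_or_nonempty with h1 | h1
  · rcases F2.eq_empty_or_nonempty with h2 | h2
    · have h0 : F.card = 0 := by rw [← hsplit, h1, h2]; simp
      rw [h0]; push_cast; linarith
    · obtain ⟨e2, he20, he2ρ, _, hc2⟩ := row_card_bound F2 h2 hsame2 hFF2
      have : F1.card = 0 := by rw [h1]; simp
      have : (F.card : ℤ) = (F2.card : ℤ) := by
        rw [← hsplit]; push_cast; omega
      rw [this]; linarith
  · rcases F2.eq_empty_or_nonempty with h2 | h2
    · obtain ⟨e1, he10, he1ρ, _, hc1⟩ := row_card_bound F1 h1 hsame1 hFF1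
      have : F2.card = 0 := by rw [h2]; simp
      have : (F.card : ℤ) = (F1.card : ℤ) := by
        rw [← hsplit]; push_cast; omega
      rw [this]; linarith
    · obtain ⟨e1, he10, he1ρ, ⟨p1, hp1, hep1⟩, hc1⟩ := row_card_bound F1 h1 hsame1 hFF1
      obtain ⟨e2, he20, he2ρ, ⟨p2, hp2, hep2⟩, hc2⟩ := row_card_bound F2 h2 hsame2 hFF2
      -- e1 + e2 ≥ d
      obtain ⟨hp1F, hp1s⟩ := Finset.mem_filter.mp hp1
      obtain ⟨hp2F, hp2s⟩ := Finset.mem_filter.mp hp2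
      push_neg at hp2s
      have he1 : e1 = a - (d : ℤ) * ((p1.1 : ℕ) : ℤ) := by
        rw [hep1, abs_of_nonneg (by linarith)]
      have he2 : e2 = (d : ℤ) * ((p2.1 : ℕ) : ℤ) - a := by
        rw [hep2, abs_sub_comm, abs_of_nonneg (by linarith)]
      have hlt : ((p1.1 : ℕ) : ℤ) < ((p2.1 : ℕ) : ℤ) := by
        have hd0 : (0 : ℤ) < d := by linarith
        have : (d : ℤ) * ((p1.1 : ℕ) : ℤ) < (d : ℤ) * ((p2.1 : ℕ) : ℤ) := by linarith
        exact lt_of_mul_lt_mul_left this (le_of_lt hd0)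
      have hsep : e1 + e2 ≥ (d : ℤ) := by
        have : ((p1.1 : ℕ) : ℤ) + 1 ≤ ((p2.1 : ℕ) : ℤ) := hlt
        nlinarith [Int.natCast_nonneg d]
      have : (F.card : ℤ) = (F1.card : ℤ) + (F2.card : ℤ) := by
        rw [← hsplit]; push_cast; ring
      rw [this]; linarith

lemma sum_odd_eq_sq (r : ℕ) : ∑ t ∈ Finset.range r, (2 * (r - 1 - t) + 1) = r ^ 2 := by
  have h := Finset.sum_range_reflect (fun t => 2 * t + 1) r
  have h2 : ∀ r : ℕ, ∑ t ∈ Finset.range r, (2 * t + 1) = r ^ 2 := by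
    intro r
    induction r with
    | zero => simp
    | succ r ih => rw [Finset.sum_range_succ, ih]; ring
  rw [h] at *
  rw [h2]

/-- Lower bound for fences with `c ≥ 2`: if
`ℓ = max {k : (k-1)⌈√(kn)⌉ + 1 ≤ c√n}`, then `b(G_{c√n, n}) ≥ ⌈√(ℓn)⌉`. -/
theorem burn_fence_lower (c : ℝ) (hc : 2 ≤ c) (n m ℓ : ℕ) (hn : 1 ≤ n)
    (hm : (m : ℝ) = c * Real.sqrt n)
    (hℓ : IsGreatest {k : ℕ | (k - 1) * ⌈Real.sqrt (k * n)⌉₊ + 1 ≤ m} ℓ) :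
    ⌈Real.sqrt (ℓ * n)⌉₊ ≤ burn (gridGraph m n) := by
  classical
  set d := ⌈Real.sqrt (ℓ * n)⌉₊ with hd
  -- m ≥ 2
  have hsq1 : (1 : ℝ) ≤ Real.sqrt n := Real.one_le_sqrt.mpr (by exact_mod_cast hn)
  have hm2 : 2 ≤ m := by
    have : (2 : ℝ) ≤ (m : ℝ) := by rw [hm]; nlinarith
    exact_mod_cast this
  have hm0 : 0 < m := by omega
  have hn0 : 0 < n := hn
  -- ℓ ≥ 1
  have hℓ1 : 1 ≤ ℓ := hℓ.2 (by simp [Set.mem_setOf_eq]; omega)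
  have hℓmem : (ℓ - 1) * d + 1 ≤ m := hℓ.1
  have hln0 : 0 < ℓ * n := Nat.mul_pos hℓ1 hn0
  have hd1 : 1 ≤ d := by
    rw [hd]
    apply Nat.ceil_pos.mpr
    apply Real.sqrt_pos.mpr
    exact_mod_cast hln0
  -- the set defining burn is nonempty
  have hVne : Nonempty (Fin m × Fin n) := ⟨(⟨0, hm0⟩, ⟨0, hn0⟩)⟩
  set N := Fintype.card (Fin m × Fin n) with hN
  have hN0 : 0 < N := Fintype.card_pos
  set e : Fin m × Fin n ≃ Fin N := Fintype.equivFin _ with he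
  set s0 : ℕ → Fin m × Fin n := fun t => if h : t < N then e.symm ⟨t, h⟩ else e.symm ⟨0, hN0⟩
    with hs0
  have hSne : N ∈ {r | ∃ s : ℕ → Fin m × Fin n, Set.univ ⊆ burnSet (gridGraph m n) s r} := by
    refine ⟨s0, fun v _ => ?_⟩
    have hv : (e v : ℕ) < N := (e v).isLt
    have hv2 : s0 (e v) = v := by
      simp only [hs0, dif_pos hv]
      simp
    have := source_mem_burnSet (G := gridGraph m n) (s := s0) (e v : ℕ)
    rw [hv2] at this
    exact burnSet_mono (by omega) this
  rw [burn, pburn]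
  apply le_csInf ⟨N, hSne⟩
  rintro r ⟨s, hs⟩
  by_contra hlt
  push_neg at hlt
  -- hlt : r < d
  -- rows fit
  have hrow : ∀ j : Fin ℓ, d * (j : ℕ) < m := by
    intro j
    have h1 : (j : ℕ) ≤ ℓ - 1 := by omega
    have h2 : d * (j : ℕ) ≤ d * (ℓ - 1) := Nat.mul_le_mul_left d h1
    have h3 : d * (ℓ - 1) = (ℓ - 1) * d := Nat.mul_comm _ _
    omega
  set vtx : Fin ℓ × Fin n → Fin m × Fin n :=
    fun p => (⟨d * (p.1 : ℕ), hrow p.1⟩, p.2) with hvtx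
  have hkey : ∀ p : Fin ℓ × Fin n, ∃ t, t < r ∧
      |(((s t).1 : ℕ) : ℤ) - (d : ℤ) * ((p.1 : ℕ) : ℤ)| +
        |(((s t).2 : ℕ) : ℤ) - ((p.2 : ℕ) : ℤ)| + t + 1 ≤ r := by
    intro p
    obtain ⟨t, ht, pw, hlen⟩ := exists_walk_of_mem_burnSet (hs (Set.mem_univ (vtx p)))
    refine ⟨t, ht, ?_⟩
    have hL := walk_l1 pw
    have h1 : (((vtx p).1 : ℕ) : ℤ) = (d : ℤ) * ((p.1 : ℕ) : ℤ) := by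
      simp [hvtx]
    have h2 : (((vtx p).2 : ℕ) : ℤ) = ((p.2 : ℕ) : ℤ) := by simp [hvtx]
    rw [h1, h2] at hL
    have : (pw.length : ℤ) + t + 1 ≤ r := by exact_mod_cast hlen
    linarith
  choose φ hφ1 hφ2 using hkey
  have hcount : (Finset.univ : Finset (Fin ℓ × Fin n)).card =
      ∑ t ∈ Finset.range r, (Finset.univ.filter (fun p => φ p = t)).card :=
    Finset.card_eq_sum_card_fiberwise (fun p _ => Finset.mem_range.mpr (hφ1 p))
  have hcard : (Finset.univ : Finset (Fin ℓ × Fin n)).card = ℓ * n := by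
    simp [Fintype.card_prod]
  have hfib : ∀ t ∈ Finset.range r,
      (Finset.univ.filter (fun p => φ p = t)).card ≤ 2 * (r - 1 - t) + 1 := by
    intro t ht
    rw [Finset.mem_range] at ht
    have hρ0 : (0 : ℤ) ≤ (r : ℤ) - 1 - t := by
      have : (t : ℤ) < r := by exact_mod_cast ht
      linarith
    have hdr : ((r : ℤ) - 1 - t) + 1 ≤ (d : ℤ) := by
      have h1 : (r : ℤ) < d := by exact_mod_cast hlt
      have h2 : (0 : ℤ) ≤ t := Int.natCast_nonneg t
      linarith
    have hB := fiber_bound (a := (((s t).1 : ℕ) : ℤ)) (b := (((s t).2 : ℕ) : ℤ))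
      hρ0 hdr (Finset.univ.filter (fun p => φ p = t)) ?_
    · have := ht
      omega
    · intro p hp
      have hpt : φ p = t := (Finset.mem_filter.mp hp).2
      have := hφ2 p
      rw [hpt] at this
      linarith
  have hsum : ∑ t ∈ Finset.range r, (Finset.univ.filter (fun p => φ p = t)).card ≤
      ∑ t ∈ Finset.range r, (2 * (r - 1 - t) + 1) := Finset.sum_le_sum hfib
  have hmain : ℓ * n ≤ r ^ 2 := by
    rw [← sum_odd_eq_sq r]
    calc ℓ * n = (Finset.univ : Finset (Fin ℓ × Fin n)).card := hcard.symm
      _ = _ := hcount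
      _ ≤ _ := hsum
  -- but r ≤ d - 1 and (d-1)^2 < ℓ n
  have hr : r ≤ d - 1 := by omega
  have hrd : r ^ 2 ≤ (d - 1) ^ 2 := Nat.pow_le_pow_left hr 2
  have hdlt : (d - 1) ^ 2 < ℓ * n := by
    have h1 : d - 1 < d := by omega
    have h2 : ((d - 1 : ℕ) : ℝ) < Real.sqrt ((ℓ : ℝ) * n) := by
      have := (Nat.lt_ceil (n := d - 1) (a := Real.sqrt ((ℓ : ℝ) * n))).mp (by
        rw [← hd]; push_cast at *; exact_mod_cast h1)
      exact this
    have h3 : ((d - 1 : ℕ) : ℝ) ^ 2 < Real.sqrt ((ℓ : ℝ) * n) ^ 2 := by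
      apply pow_lt_pow_left₀ h2 (by positivity) (by norm_num)
    rw [Real.sq_sqrt (by positivity)] at h3
    have h4 : (((d - 1) ^ 2 : ℕ) : ℝ) < ((ℓ * n : ℕ) : ℝ) := by push_cast; push_cast at h3; linarith
    exact_mod_cast h4
  omega
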